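/- (Neyman–Pearson lemma) Let P_0, P_1 have densities p_0, p_1 with respect to a measure μ, and let d*(x) = 1{p_1(x) ≥ h·p_0(x)} for some h ≥ 0. If d: X → [0,1] is any (possibly randomized) test with ∫ d·p_0 dμ ≤ ∫ d*·p_0 dμ, then ∫ d·p_1 dμ ≤ ∫ d*·p_1 dμ. -/
import Mathlib


open MeasureTheory

/-- Neyman–Pearson lemma. With densities `p₀, p₁` w.r.t. `μ`,
the deterministic test `d*(x) = 1{p₁(x) ≥ h p₀(x)}` is most powerful among all
(possibly randomized) tests `d : X → [0,1]` of no larger size: if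
`∫ d p₀ dμ ≤ ∫ d* p₀ dμ` then `∫ d p₁ dμ ≤ ∫ d* p₁ dμ`. -/
theorem neyman_pearson_lemma
    {X : Type*} [MeasurableSpace X] (μ : Measure X)
    (p0 p1 : X → ℝ) (hp0 : ∀ x, 0 ≤ p0 x) (hp1 : ∀ x, 0 ≤ p1 x)
    (hm0 : Measurable p0) (hm1 : Measurable p1)
    (hi0 : Integrable p0 μ) (hi1 : Integrable p1 μ)
    (h : ℝ) (hh : 0 ≤ h)
    (dstar : X → ℝ) (hdstar : ∀ x, dstar x = if h * p0 x ≤ p1 x then 1 else 0)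
    (d : X → ℝ) (hd : Measurable d) (hd01 : ∀ x, d x ∈ Set.Icc (0:ℝ) 1)
    (hsize : ∫ x, d x * p0 x ∂μ ≤ ∫ x, dstar x * p0 x ∂μ) :
    ∫ x, d x * p1 x ∂μ ≤ ∫ x, dstar x * p1 x ∂μ := by
  have hmds : Measurable dstar := by
    have : dstar = fun x => if h * p0 x ≤ p1 x then (1:ℝ) else 0 := funext hdstar
    rw [this]
    exact Measurable.ite (measurableSet_le (hm0.const_mul h) hm1)
      measurable_const measurable_const
  have hds01 : ∀ x, dstar x ∈ Set.Icc (0:ℝ) 1 := by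
    intro x; rw [hdstar x]; split <;> simp
  have key : ∀ (f : X → ℝ), Measurable f → (∀ x, f x ∈ Set.Icc (0:ℝ) 1) →
      ∀ (p : X → ℝ), (∀ x, 0 ≤ p x) → Measurable p → Integrable p μ →
      Integrable (fun x => f x * p x) μ := by
    intro f hf hf01 p hp hmp hip
    refine hip.mono' (hf.mul hmp).aestronglyMeasurable (ae_of_all _ fun x => ?_)
    rw [Real.norm_eq_abs, abs_mul, abs_of_nonneg (hf01 x).1, abs_of_nonneg (hp x)]
    calc f x * p x ≤ 1 * p x := mul_le_mul_of_nonneg_right (hf01 x).2 (hp x)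
    _ = p x := one_mul _
  have i00 := key d hd hd01 p0 hp0 hm0 hi0
  have i01 := key d hd hd01 p1 hp1 hm1 hi1
  have i10 := key dstar hmds hds01 p0 hp0 hm0 hi0
  have i11 := key dstar hmds hds01 p1 hp1 hm1 hi1
  have hpt : ∀ x, 0 ≤ (dstar x - d x) * (p1 x - h * p0 x) := by
    intro x
    rcases le_or_gt (h * p0 x) (p1 x) with hle | hlt
    · have : dstar x = 1 := by rw [hdstar x, if_pos hle]
      exact mul_nonneg (by linarith [(hd01 x).2]) (by linarith)
    · have : dstar x = 0 := by rw [hdstar x, if_neg (not_le.mpr hlt)]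
      nlinarith [(hd01 x).1]
  have hint : 0 ≤ ∫ x, (dstar x - d x) * (p1 x - h * p0 x) ∂μ :=
    integral_nonneg hpt
  have hexp : ∫ x, (dstar x - d x) * (p1 x - h * p0 x) ∂μ =
      (∫ x, dstar x * p1 x ∂μ - ∫ x, d x * p1 x ∂μ)
      - h * (∫ x, dstar x * p0 x ∂μ - ∫ x, d x * p0 x ∂μ) := by
    have : ∀ x, (dstar x - d x) * (p1 x - h * p0 x) =
        dstar x * p1 x - d x * p1 x - (h * (dstar x * p0 x) - h * (d x * p0 x)) := by
      intro x; ring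
    simp_rw [this]
    have j1 : Integrable (fun x => dstar x * p1 x - d x * p1 x) μ := i11.sub i01
    have k1 : Integrable (fun x => h * (dstar x * p0 x)) μ := i10.const_mul h
    have k2 : Integrable (fun x => h * (d x * p0 x)) μ := i00.const_mul h
    have j2 : Integrable (fun x => h * (dstar x * p0 x) - h * (d x * p0 x)) μ := k1.sub k2
    rw [integral_sub j1 j2, integral_sub i11 i01, integral_sub k1 k2,
      integral_const_mul, integral_const_mul]
    ring
  rw [hexp] at hint
  nlinarith [mul_nonneg hh (sub_nonneg.mpr hsize)]
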